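/- The function g is monotone in each variable: (i) for every fixed b ∈ (0,1), g(·,b) is strictly increasing on [1/2, 1), i.e., if 1/2 ≤ x1 < x2 < 1 then g(x1,b) < g(x2,b); (ii) for every fixed x ∈ [1/2, 1), g(x,·) is nonincreasing on (0,1), i.e., if 0 < b1 < b2 < 1 then g(x,b1) ≥ g(x,b2). -/

import Mathlib

/-- The function `g(x,b)` of the paper, for `b ∈ (0,1)`:
`g(x,b) = (x^{1-b} - (1-x)^{1-b}) / (x·(1-x)^{1-b} - (1-x)·x^{1-b})` for
`x ∈ (1/2,1)` and `g(1/2,b) = 2/b - 2`. -/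
noncomputable def g (x b : ℝ) : ℝ :=
  if x = 1 / 2 then 2 / b - 2
  else (x ^ (1 - b) - (1 - x) ^ (1 - b)) /
    (x * (1 - x) ^ (1 - b) - (1 - x) * x ^ (1 - b))

open Real Set

section aux

lemma rpow_lt_self' {s t : ℝ} (hs1 : s < 1) (ht : 1 < t) : t ^ s < t := by
  nth_rewrite 2 [← Real.rpow_one t]
  exact Real.rpow_lt_rpow_of_exponent_lt ht hs1

lemma one_lt_rpow' {s t : ℝ} (hs0 : 0 < s) (ht : 1 < t) : 1 < t ^ s :=
  (Real.one_lt_rpow_iff_of_pos (lt_trans one_pos ht)).2 (Or.inl ⟨ht, hs0⟩)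

/-- Key inequality A: for `0<s<1` and `t>1`, `t^{2s} - 1 < s (t²-1) t^{s-1}`. -/
lemma lemA {s t : ℝ} (hs0 : 0 < s) (hs1 : s < 1) (ht : 1 < t) :
    t ^ s * t ^ s - 1 < s * (t * t - 1) * t ^ (s - 1) := by
  have ht0 : (0:ℝ) < t := lt_trans one_pos ht
  set S : ℝ → ℝ := fun τ => s * (τ - τ⁻¹) - τ ^ s + τ ^ (-s) with hSdef
  have hS : ∀ τ : ℝ, 0 < τ → HasDerivAt S
      (s * (1 - -(τ^2)⁻¹) - s * τ ^ (s-1) + (-s) * τ ^ (-s-1)) τ := by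
    intro τ hτ
    have h1 : HasDerivAt (fun τ : ℝ => τ - τ⁻¹) (1 - -(τ^2)⁻¹) τ :=
      (hasDerivAt_id τ).sub (hasDerivAt_inv hτ.ne')
    have h2 : HasDerivAt (fun τ : ℝ => τ ^ s) (s * τ ^ (s-1)) τ :=
      Real.hasDerivAt_rpow_const (Or.inl hτ.ne')
    have h3 : HasDerivAt (fun τ : ℝ => τ ^ (-s)) ((-s) * τ ^ (-s-1)) τ :=
      Real.hasDerivAt_rpow_const (Or.inl hτ.ne')
    exact ((h1.const_mul s).sub h2).add h3
  have hSmono : StrictMonoOn S (Ici 1) := by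
    apply strictMonoOn_of_deriv_pos (convex_Ici 1)
    · intro τ hτ
      exact (hS τ (lt_of_lt_of_le one_pos hτ)).continuousAt.continuousWithinAt
    · intro τ hτ
      rw [interior_Ici] at hτ
      have hτ1 : (1:ℝ) < τ := hτ
      have hτ0 : (0:ℝ) < τ := lt_trans one_pos hτ1
      rw [(hS τ hτ0).deriv]
      set A := τ ^ (1+s) with hAdef
      set B := τ ^ (1-s) with hBdef
      have hA : 1 < A := Real.one_lt_rpow_iff_of_pos hτ0 |>.2 (Or.inl ⟨hτ1, by linarith⟩)
      have hB : 1 < B := Real.one_lt_rpow_iff_of_pos hτ0 |>.2 (Or.inl ⟨hτ1, by linarith⟩)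
      have hvB : τ ^ (s-1) = B⁻¹ := by
        rw [hBdef, ← Real.rpow_neg hτ0.le]; ring_nf
      have hvA : τ ^ (-s-1) = A⁻¹ := by
        rw [hAdef, ← Real.rpow_neg hτ0.le]; ring_nf
      have hAB : (τ^2)⁻¹ = A⁻¹ * B⁻¹ := by
        rw [← mul_inv, hAdef, hBdef, ← Real.rpow_add hτ0,
          show (1+s)+(1-s) = (2:ℝ) by ring, show (2:ℝ) = ((2:ℕ):ℝ) by norm_num,
          Real.rpow_natCast]
      rw [hvB, hvA, hAB]
      have h1 : 0 < 1 - A⁻¹ := by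
        rw [sub_pos]; exact inv_lt_one_of_one_lt₀ hA
      have h2 : 0 < 1 - B⁻¹ := by
        rw [sub_pos]; exact inv_lt_one_of_one_lt₀ hB
      have key : s * (1 - -(A⁻¹ * B⁻¹)) - s * B⁻¹ + (-s) * A⁻¹
          = s * ((1 - A⁻¹) * (1 - B⁻¹)) := by ring
      rw [key]
      positivity
  have hS1 : S 1 = 0 := by simp [hSdef]
  have hSt : 0 < S t := by
    have := hSmono (self_mem_Ici) (le_of_lt ht) ht
    rwa [hS1] at this
  have hu : t ^ s = t ^ (s-1) * t := by
    nth_rewrite 1 [show s = (s-1)+1 by ring]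
    rw [Real.rpow_add_one ht0.ne']
  have huw : t ^ (-s) * t ^ s = 1 := by
    rw [← Real.rpow_add ht0]; simp
  have htinv : t * t⁻¹ = 1 := mul_inv_cancel₀ ht0.ne'
  have hupos : 0 < t ^ s := Real.rpow_pos_of_pos ht0 s
  have hthis := mul_pos hSt hupos
  rw [hSdef] at hthis
  simp only at hthis
  have e1 : (s * (t - t⁻¹) - t ^ s + t ^ (-s)) * t ^ s
      = s * (t * t - 1) * t ^ (s-1) - t ^ s * t ^ s + 1 := by
    linear_combination (s*t - s*t⁻¹) * hu + huw + (-(s * t ^ (s-1))) * htinv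
  rw [e1] at hthis
  linarith

/-- Key inequality B: `2s(t - t^s) < (1-s)(1+t)(t^s-1)` for `0<s<1`, `t>1`. -/
lemma lemB {s t : ℝ} (hs0 : 0 < s) (hs1 : s < 1) (ht : 1 < t) :
    2*s*(t - t ^ s) < (1-s) * ((1+t) * (t ^ s - 1)) := by
  have ht0 : (0:ℝ) < t := lt_trans one_pos ht
  set ψ : ℝ → ℝ := fun τ =>
    (1-s)*(τ ^ s - 1) + (1-s)*((1+τ) * (s * τ ^ (s-1))) - 2*s*(1 - s * τ ^ (s-1))
    with hψdef
  have hψ : ∀ τ : ℝ, 0 < τ → HasDerivAt ψ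
      ((1-s)*(s * τ ^ (s-1)) +
       (1-s)*((0+1) * (s * τ ^ (s-1)) + (1+τ) * (s * ((s-1) * τ ^ (s-2)))) -
       2*s*(0 - s * ((s-1) * τ ^ (s-2)))) τ := by
    intro τ hτ
    have h1 : HasDerivAt (fun τ : ℝ => τ ^ s) (s * τ ^ (s-1)) τ :=
      Real.hasDerivAt_rpow_const (Or.inl hτ.ne')
    have hv : HasDerivAt (fun τ : ℝ => τ ^ (s-1)) ((s-1) * τ ^ (s-1-1)) τ :=
      Real.hasDerivAt_rpow_const (Or.inl hτ.ne')
    rw [show s-1-1 = s-2 by ring] at hv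
    have hA : HasDerivAt (fun τ : ℝ => 1 + τ) (0+1) τ :=
      (hasDerivAt_const τ 1).add (hasDerivAt_id τ)
    exact (((h1.sub_const 1).const_mul (1-s)).add
      ((hA.mul (hv.const_mul s)).const_mul (1-s))).sub
      (((hasDerivAt_const τ 1).sub (hv.const_mul s)).const_mul (2*s))
  have hψpos : ∀ τ : ℝ, 1 < τ → 0 < ψ τ := by
    intro τ hτ1
    have hmono : StrictMonoOn ψ (Ici 1) := by
      apply strictMonoOn_of_deriv_pos (convex_Ici 1)
      · intro τ hτ
        exact (hψ τ (lt_of_lt_of_le one_pos hτ)).continuousAt.continuousWithinAt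
      · intro τ hτ
        rw [interior_Ici] at hτ
        have hτ1 : (1:ℝ) < τ := hτ
        have hτ0 : (0:ℝ) < τ := lt_trans one_pos hτ1
        rw [(hψ τ hτ0).deriv]
        have hvw : τ ^ (s-1) = τ ^ (s-2) * τ := by
          nth_rewrite 1 [show s-1 = (s-2)+1 by ring]
          rw [Real.rpow_add_one hτ0.ne']
        have hw0 : 0 < τ ^ (s-2) := Real.rpow_pos_of_pos hτ0 (s-2)
        have e : (1-s)*(s * τ ^ (s-1)) +
            (1-s)*((0+1) * (s * τ ^ (s-1)) + (1+τ) * (s * ((s-1) * τ ^ (s-2)))) -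
            2*s*(0 - s * ((s-1) * τ ^ (s-2)))
            = s*(1-s)*(1+s)*(τ-1) * τ ^ (s-2) := by
          linear_combination (2*s*(1-s)) * hvw
        rw [e]
        have hpos : 0 < s*(1-s)*(1+s)*(τ-1) :=
          mul_pos (mul_pos (mul_pos hs0 (by linarith)) (by linarith)) (by linarith)
        positivity
    have hψ1 : ψ 1 = 0 := by
      simp only [hψdef, Real.one_rpow]; ring
    have := hmono self_mem_Ici (le_of_lt hτ1) hτ1
    rwa [hψ1] at this
  set φ : ℝ → ℝ := fun τ => (1-s)*((1+τ)*(τ ^ s - 1)) - 2*s*(τ - τ ^ s) with hφdef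
  have hφ : ∀ τ : ℝ, 0 < τ → HasDerivAt φ (ψ τ) τ := by
    intro τ hτ
    have h1 : HasDerivAt (fun τ : ℝ => τ ^ s) (s * τ ^ (s-1)) τ :=
      Real.hasDerivAt_rpow_const (Or.inl hτ.ne')
    have hA : HasDerivAt (fun τ : ℝ => 1 + τ) (0+1) τ :=
      (hasDerivAt_const τ 1).add (hasDerivAt_id τ)
    have := ((hA.mul (h1.sub_const 1)).const_mul (1-s)).sub
      (((hasDerivAt_id τ).sub h1).const_mul (2*s))
    refine this.congr_deriv ?_
    simp only [hψdef]; ring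
  have hφmono : StrictMonoOn φ (Ici 1) := by
    apply strictMonoOn_of_deriv_pos (convex_Ici 1)
    · intro τ hτ
      exact (hφ τ (lt_of_lt_of_le one_pos hτ)).continuousAt.continuousWithinAt
    · intro τ hτ
      rw [interior_Ici] at hτ
      rw [(hφ τ (lt_trans one_pos hτ)).deriv]
      exact hψpos τ hτ
  have hφ1 : φ 1 = 0 := by simp only [hφdef, Real.one_rpow]; ring
  have := hφmono self_mem_Ici (le_of_lt ht) ht
  rw [hφ1] at this
  simp only [hφdef] at this
  linarith

/-- Strict monotonicity of `k(τ) = (1+τ)(τ^s-1)/(τ-τ^s)` on `(1,∞)`. -/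
lemma kmono {s : ℝ} (hs0 : 0 < s) (hs1 : s < 1) :
    StrictMonoOn (fun τ : ℝ => (1+τ)*(τ ^ s - 1)/(τ - τ ^ s)) (Ioi 1) := by
  have key : ∀ τ : ℝ, 1 < τ → HasDerivAt (fun τ : ℝ => (1+τ)*(τ ^ s - 1)/(τ - τ ^ s))
      ((((0+1)*(τ ^ s - 1) + (1+τ)*(s * τ ^ (s-1))) * (τ - τ ^ s) -
        (1+τ)*(τ ^ s - 1) * (1 - s * τ ^ (s-1))) / (τ - τ ^ s)^2) τ := by
    intro τ hτ1
    have hτ0 : (0:ℝ) < τ := lt_trans one_pos hτ1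
    have hden : 0 < τ - τ ^ s := sub_pos.2 (rpow_lt_self' hs1 hτ1)
    have h1 : HasDerivAt (fun τ : ℝ => τ ^ s) (s * τ ^ (s-1)) τ :=
      Real.hasDerivAt_rpow_const (Or.inl hτ0.ne')
    have hA : HasDerivAt (fun τ : ℝ => 1 + τ) (0+1) τ :=
      (hasDerivAt_const τ 1).add (hasDerivAt_id τ)
    exact (hA.mul (h1.sub_const 1)).div ((hasDerivAt_id τ).sub h1) hden.ne'
  apply strictMonoOn_of_deriv_pos (convex_Ioi 1)
  · intro τ hτ
    exact (key τ hτ).continuousAt.continuousWithinAt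
  · intro τ hτ
    rw [interior_Ioi] at hτ
    have hτ1 : (1:ℝ) < τ := hτ
    have hden : 0 < τ - τ ^ s := sub_pos.2 (rpow_lt_self' hs1 hτ1)
    rw [(key τ hτ1).deriv]
    apply div_pos _ (by positivity)
    have eq1 : ((0+1)*(τ ^ s - 1) + (1+τ)*(s * τ ^ (s-1))) * (τ - τ ^ s) -
        (1+τ)*(τ ^ s - 1) * (1 - s * τ ^ (s-1))
        = s * (τ * τ - 1) * τ ^ (s-1) - (τ ^ s * τ ^ s - 1) := by ring
    rw [eq1]
    linarith [lemA hs0 hs1 hτ1]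

lemma frac_eq {s x y t : ℝ} (hy : 0 < y) (ht : 0 < t) (hx : x = t*y)
    (hyt : y*(1+t) = 1) (hD : x*y ^ s - y*x ^ s ≠ 0) (hD2 : t - t ^ s ≠ 0) :
    (x ^ s - y ^ s)/(x*y ^ s - y*x ^ s) = (1+t)*(t ^ s - 1)/(t - t ^ s) := by
  have hxs : x ^ s = t ^ s * y ^ s := by
    rw [hx, Real.mul_rpow ht.le hy.le]
  subst hx
  rw [div_eq_div_iff hD hD2, hxs]
  linear_combination (-(y ^ s * (t ^ s - 1) * (t - t ^ s))) * hyt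

/-- The reparametrized form of `g` for `x ∈ (1/2,1)`. -/
lemma gform {x b : ℝ} (hx : 1/2 < x) (hx1 : x < 1) (hb0 : 0 < b) (hb1 : b < 1) :
    g x b = (1 + x/(1-x)) * ((x/(1-x)) ^ (1-b) - 1) / (x/(1-x) - (x/(1-x)) ^ (1-b)) := by
  have hs0 : 0 < 1 - b := by linarith
  have hs1 : 1 - b < 1 := by linarith
  have hy : (0:ℝ) < 1 - x := by linarith
  have hyx : 1 - x < x := by linarith
  have ht1 : 1 < x/(1-x) := (one_lt_div hy).2 hyx
  have ht0 : 0 < x/(1-x) := lt_trans one_pos ht1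
  have hxe : x = (x/(1-x)) * (1-x) := by field_simp
  have hyt : (1-x) * (1 + x/(1-x)) = 1 := by field_simp; ring
  have hD2 : x/(1-x) - (x/(1-x)) ^ (1-b) ≠ 0 :=
    (sub_pos.2 (rpow_lt_self' hs1 ht1)).ne'
  have hxs : x ^ (1-b) = (x/(1-x)) ^ (1-b) * (1-x) ^ (1-b) := by
    nth_rewrite 1 [hxe]
    rw [Real.mul_rpow ht0.le hy.le]
  have hDpos : 0 < x * (1-x) ^ (1-b) - (1-x) * x ^ (1-b) := by
    have e : x * (1-x) ^ (1-b) - (1-x) * x ^ (1-b)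
        = ((1-x) * (1-x) ^ (1-b)) * (x/(1-x) - (x/(1-x)) ^ (1-b)) := by
      linear_combination ((1-x) ^ (1-b)) * hxe - (1-x) * hxs
    rw [e]
    exact mul_pos (mul_pos hy (Real.rpow_pos_of_pos hy (1-b)))
      (sub_pos.2 (rpow_lt_self' hs1 ht1))
  rw [g, if_neg (by linarith : x ≠ 1/2)]
  exact frac_eq hy ht0 hxe hyt hDpos.ne' hD2

end aux

/-- Lemma 2(ii) of the paper: `g(·,b)` is strictly increasing on `[1/2,1)`
for each fixed `b ∈ (0,1)`, and `g(x,·)` is nonincreasing in `b ∈ (0,1)` for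
each fixed `x ∈ [1/2,1)`. -/
theorem stmt_6 :
    (∀ b : ℝ, 0 < b → b < 1 →
      ∀ x1 x2 : ℝ, 1 / 2 ≤ x1 → x1 < x2 → x2 < 1 → g x1 b < g x2 b) ∧
    (∀ x : ℝ, 1 / 2 ≤ x → x < 1 →
      ∀ b1 b2 : ℝ, 0 < b1 → b1 < b2 → b2 < 1 → g x b2 ≤ g x b1) := by
  constructor
  · intro b hb0 hb1 x1 x2 hx1 h12 hx2
    have hs0 : 0 < 1 - b := by linarith
    have hs1 : 1 - b < 1 := by linarith
    have hx2h : 1/2 < x2 := lt_of_le_of_lt hx1 h12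
    have hy2 : (0:ℝ) < 1 - x2 := by linarith
    have ht2 : 1 < x2/(1-x2) := (one_lt_div hy2).2 (by linarith)
    rw [gform hx2h hx2 hb0 hb1]
    rcases eq_or_lt_of_le hx1 with heq | hlt
    · rw [← heq, g, if_pos rfl]
      set t := x2/(1-x2) with htdef
      have hden : 0 < t - t ^ (1-b) := sub_pos.2 (rpow_lt_self' hs1 ht2)
      have he : 2/b - 2 = (2 - 2*b)/b := by field_simp
      rw [he, div_lt_div_iff₀ hb0 hden]
      have hB := lemB hs0 hs1 ht2
      nlinarith [hB]
    · have hx1l : x1 < 1 := lt_trans h12 hx2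
      have hy1 : (0:ℝ) < 1 - x1 := by linarith
      have ht1 : 1 < x1/(1-x1) := (one_lt_div hy1).2 (by linarith)
      have ht12 : x1/(1-x1) < x2/(1-x2) := by
        rw [div_lt_div_iff₀ hy1 hy2]
        nlinarith
      rw [gform hlt hx1l hb0 hb1]
      exact kmono hs0 hs1 (mem_Ioi.2 ht1) (mem_Ioi.2 ht2) ht12
  · intro x hx hx1 b1 b2 hb1 h12 hb2
    rcases eq_or_lt_of_le hx with heq | hlt
    · rw [← heq, g, if_pos rfl, g, if_pos rfl]
      have : 2/b2 ≤ 2/b1 := by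
        apply div_le_div_of_nonneg_left (by norm_num) hb1 (le_of_lt h12)
      linarith
    · have hy : (0:ℝ) < 1 - x := by linarith
      have ht1 : 1 < x/(1-x) := (one_lt_div hy).2 (by linarith)
      set t := x/(1-x) with htdef
      have hs20 : 0 < 1 - b2 := by linarith
      have hs21 : 1 - b2 < 1 := by linarith
      have hs10 : 0 < 1 - b1 := by linarith
      have hs11 : 1 - b1 < 1 := by linarith
      rw [gform hlt hx1 (by linarith) hb2, gform hlt hx1 hb1 (by linarith)]
      have hm : t ^ (1-b2) ≤ t ^ (1-b1) :=
        Real.rpow_le_rpow_of_exponent_le (le_of_lt ht1) (by linarith)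
      have h2 : 1 < t ^ (1-b2) := one_lt_rpow' hs20 ht1
      have h1t : t ^ (1-b1) < t := rpow_lt_self' hs11 ht1
      rw [mul_div_assoc, mul_div_assoc]
      apply mul_le_mul_of_nonneg_left _ (by linarith : (0:ℝ) ≤ 1 + t)
      apply div_le_div₀ (by linarith) (by linarith) (by linarith) (by linarith)
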